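/- In the graded ring Z[u,v]/(u^{n_1+1}, v^{n_2+1} − u v^{n_2}) with deg u = deg v = 2, where n_1, n_2 are positive integers, the element (v − u)^{n_1+n_2} + n_2 v^{n_1+n_2} equals (Σ_{j=0}^{n_1} (−1)^j C(n_1+n_2, j) + n_2) · u^{n_1} v^{n_2}. -/

import Mathlib

open MvPolynomial in
set_option maxHeartbeats 1000000 in
/-- In `H^*(L(n₁,n₂)) = ℤ[u,v]/(u^{n₁+1}, v^{n₂+1} - u v^{n₂})` the class
`(v-u)^{n₁+n₂} + n₂ v^{n₁+n₂}` equals `(Σ_{j=0}^{n₁} (-1)^j C(n₁+n₂,j) + n₂) u^{n₁} v^{n₂}`. -/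
theorem sn_L (n₁ n₂ : ℕ) (h₁ : 0 < n₁) (h₂ : 0 < n₂) :
    Ideal.Quotient.mk
        (Ideal.span {(X 0 : MvPolynomial (Fin 2) ℤ) ^ (n₁ + 1),
          (X 1 : MvPolynomial (Fin 2) ℤ) ^ (n₂ + 1) - X 0 * X 1 ^ n₂})
        ((X 1 - X 0) ^ (n₁ + n₂) + (n₂ : MvPolynomial (Fin 2) ℤ) * X 1 ^ (n₁ + n₂)) =
      Ideal.Quotient.mk
        (Ideal.span {(X 0 : MvPolynomial (Fin 2) ℤ) ^ (n₁ + 1),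
          (X 1 : MvPolynomial (Fin 2) ℤ) ^ (n₂ + 1) - X 0 * X 1 ^ n₂})
        (C ((∑ j ∈ Finset.range (n₁ + 1), (-1 : ℤ) ^ j * ((n₁ + n₂).choose j : ℤ)) + n₂) *
          (X 0 ^ n₁ * X 1 ^ n₂)) := by
  set I : Ideal (MvPolynomial (Fin 2) ℤ) :=
    Ideal.span {(X 0 : MvPolynomial (Fin 2) ℤ) ^ (n₁ + 1),
      (X 1 : MvPolynomial (Fin 2) ℤ) ^ (n₂ + 1) - X 0 * X 1 ^ n₂} with hI
  set mk := Ideal.Quotient.mk I with hmk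
  set u : MvPolynomial (Fin 2) ℤ ⧸ I := mk (X 0) with hu
  set v : MvPolynomial (Fin 2) ℤ ⧸ I := mk (X 1) with hv
  set n := n₁ + n₂ with hn
  have hu0 : u ^ (n₁ + 1) = 0 := by
    rw [hu, ← map_pow]
    exact Ideal.Quotient.eq_zero_iff_mem.mpr (Ideal.subset_span (by simp))
  have hvrel : v ^ (n₂ + 1) = u * v ^ n₂ := by
    rw [hv, hu, ← map_pow, ← map_pow, ← map_mul]
    exact Ideal.Quotient.eq.mpr (Ideal.subset_span (by simp))
  have hk : ∀ k, v ^ (n₂ + k) = u ^ k * v ^ n₂ := by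
    intro k
    induction k with
    | zero => simp
    | succ k ih =>
      calc v ^ (n₂ + (k + 1)) = v ^ (n₂ + k) * v := by ring
        _ = u ^ k * (v ^ n₂ * v) := by rw [ih]; ring
        _ = u ^ k * v ^ (n₂ + 1) := by ring
        _ = u ^ (k + 1) * v ^ n₂ := by rw [hvrel]; ring
  have key : ∀ a : ℕ, a ≤ n₁ → u ^ a * v ^ (n - a) = u ^ n₁ * v ^ n₂ := by
    intro a ha
    have h1 : n - a = n₂ + (n₁ - a) := by omega
    rw [h1, hk (n₁ - a), ← mul_assoc, ← pow_add]
    congr 2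
    omega
  have hz : ∀ j : ℕ, n₁ + 1 ≤ j → u ^ j = 0 := by
    intro j hj
    have : u ^ j = u ^ (n₁ + 1) * u ^ (j - (n₁ + 1)) := by
      rw [← pow_add]; congr 1; omega
    rw [this, hu0, zero_mul]
  have expand : (v - u) ^ n =
      ∑ j ∈ Finset.range (n + 1), (-1 : MvPolynomial (Fin 2) ℤ ⧸ I) ^ j * u ^ j * v ^ (n - j)
        * (n.choose j : MvPolynomial (Fin 2) ℤ ⧸ I) := by
    rw [sub_pow]
    rw [← Finset.sum_range_reflect]
    apply Finset.sum_congr rfl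
    intro j hj
    rw [Finset.mem_range] at hj
    have hjn : j ≤ n := by omega
    have e1 : n + 1 - 1 - j = n - j := by omega
    have e2 : n - (n - j) = j := by omega
    rw [e1, e2, Nat.choose_symm hjn]
    have e3 : (-1 : MvPolynomial (Fin 2) ℤ ⧸ I) ^ (n - j + n) = (-1) ^ j := by
      have : n - j + n = j + 2 * (n - j) := by omega
      rw [this, pow_add, pow_mul]; norm_num
    rw [e3]
    ring
  have split : (v - u) ^ n =
      (((∑ j ∈ Finset.range (n₁ + 1), (-1 : ℤ) ^ j * (n.choose j : ℤ)) : ℤ) :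
        MvPolynomial (Fin 2) ℤ ⧸ I) * (u ^ n₁ * v ^ n₂) := by
    rw [expand]
    rw [Finset.range_eq_Ico, ← Finset.sum_Ico_consecutive _ (Nat.zero_le (n₁ + 1)) (by omega)]
    have z2 : ∑ j ∈ Finset.Ico (n₁ + 1) (n + 1),
        (-1 : MvPolynomial (Fin 2) ℤ ⧸ I) ^ j * u ^ j * v ^ (n - j)
          * (n.choose j : MvPolynomial (Fin 2) ℤ ⧸ I) = 0 := by
      apply Finset.sum_eq_zero
      intro j hj
      rw [Finset.mem_Ico] at hj
      rw [hz j hj.1]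
      ring
    rw [z2, add_zero, ← Finset.range_eq_Ico]
    rw [Int.cast_sum, Finset.sum_mul]
    apply Finset.sum_congr rfl
    intro j hj
    rw [Finset.mem_range] at hj
    have hj1 : j ≤ n₁ := by omega
    rw [mul_assoc _ (u ^ j), key j hj1]
    push_cast
    ring
  have hvn : v ^ n = u ^ n₁ * v ^ n₂ := by
    have : n = n₂ + n₁ := by omega
    rw [this, hk n₁]
  have hCc : ∀ c : ℤ, mk (C c) = (c : MvPolynomial (Fin 2) ℤ ⧸ I) := by
    intro c
    rw [show (C c : MvPolynomial (Fin 2) ℤ) = (c : MvPolynomial (Fin 2) ℤ) from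
      eq_intCast (C : ℤ →+* MvPolynomial (Fin 2) ℤ) c, map_intCast]
  simp only [map_add, map_mul, map_pow, map_sub, map_natCast, hCc, ← hv, ← hu, ← hn]
  rw [split, hvn]
  push_cast
  ring
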